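/- Let X be a Banach space. The norm of X is 2-rough (i.e., limsup_{‖h‖→0} (‖x+h‖ + ‖x−h‖ − 2‖x‖)/‖h‖ ≥ 2 for every x ∈ X) if and only if X is locally octahedral, meaning that for every x ∈ S_X and every ε > 0 there exists y ∈ S_X with ‖x + y‖ > 2 − ε and ‖x − y‖ > 2 − ε. -/

import Mathlib

open Filter

set_option maxHeartbeats 1000000

/-- the norm of `X` is 2-rough iff `X` is locally octahedral. -/
theorem stmt3 {X : Type*} [NormedAddCommGroup X] [NormedSpace ℝ X] [CompleteSpace X]
    [Nontrivial X] :
    (∀ x : X, 2 ≤ limsup (fun h : X => (‖x + h‖ + ‖x - h‖ - 2 * ‖x‖) / ‖h‖)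
      (nhdsWithin (0 : X) {(0 : X)}ᶜ)) ↔
    (∀ x : X, ‖x‖ = 1 → ∀ ε > (0:ℝ), ∃ y : X, ‖y‖ = 1 ∧
      ‖x + y‖ > 2 - ε ∧ ‖x - y‖ > 2 - ε) := by
  haveI hNB : (nhdsWithin (0 : X) {(0 : X)}ᶜ).NeBot := Module.punctured_nhds_neBot ℝ X 0
  constructor
  · -- 2-rough → locally octahedral
    intro H x hx ε hε
    set f : X → ℝ := fun h => (‖x + h‖ + ‖x - h‖ - 2 * ‖x‖) / ‖h‖ with hfdef
    have hlb : ∀ h : X, -2 ≤ f h := by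
      intro h
      rcases eq_or_ne h 0 with rfl | hh
      · simp [hfdef]
      · have hpos : 0 < ‖h‖ := norm_pos_iff.mpr hh
        have t1 : ‖x‖ ≤ ‖x + h‖ + ‖h‖ := by
          simpa using norm_add_le (x + h) (-h)
        have t2 : ‖x‖ ≤ ‖x - h‖ + ‖h‖ := by
          simpa using norm_add_le (x - h) h
        rw [hfdef, le_div_iff₀ hpos]
        nlinarith
    have hbd' : IsBoundedUnder (· ≥ ·) (nhdsWithin (0 : X) {(0 : X)}ᶜ) f :=
      Filter.isBoundedUnder_of ⟨-2, fun h => hlb h⟩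
    have hcb : IsCoboundedUnder (· ≤ ·) (nhdsWithin (0 : X) {(0 : X)}ᶜ) f :=
      hbd'.isCoboundedUnder_le
    have hfreq : ∃ᶠ h : X in nhdsWithin (0 : X) {(0 : X)}ᶜ, 2 - ε / 2 < f h :=
      frequently_lt_of_lt_limsup hcb (lt_of_lt_of_le (by linarith) (H x))
    have hev : ∀ᶠ h : X in nhdsWithin (0 : X) {(0 : X)}ᶜ, h ≠ 0 ∧ ‖h‖ < 1 := by
      have h1 : ∀ᶠ h : X in nhdsWithin (0 : X) {(0 : X)}ᶜ, h ≠ 0 := by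
        filter_upwards [self_mem_nhdsWithin] with h hh
        exact hh
      have h2 : ∀ᶠ h : X in nhdsWithin (0 : X) {(0 : X)}ᶜ, ‖h‖ < 1 := by
        apply Filter.Eventually.filter_mono nhdsWithin_le_nhds
        filter_upwards [Metric.ball_mem_nhds (0 : X) one_pos] with h hh
        simpa [Metric.mem_ball, dist_zero_right] using hh
      exact h1.and h2
    obtain ⟨h, hfh, hh0, hh1⟩ := (hfreq.and_eventually hev).exists
    have ht : 0 < ‖h‖ := norm_pos_iff.mpr hh0
    set t : ℝ := ‖h‖ with htdef
    refine ⟨(‖h‖)⁻¹ • h, norm_smul_inv_norm hh0, ?_, ?_⟩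
    all_goals {
      set y : X := (‖h‖)⁻¹ • h with hydef
      have hy : ‖y‖ = 1 := norm_smul_inv_norm hh0
      have hhy : h = t • y := by
        rw [hydef, htdef, smul_inv_smul₀ (ne_of_gt ht)]
      have hnum : (2 - ε / 2) * t < ‖x + h‖ + ‖x - h‖ - 2 * ‖x‖ := by
        have := hfh
        rw [hfdef] at this
        exact (lt_div_iff₀ ht).mp this
      have hub1 : ‖x + h‖ ≤ 1 + t := by
        have := norm_add_le x h
        rw [hx] at this; linarith
      have hub2 : ‖x - h‖ ≤ 1 + t := by
        have := norm_sub_le x h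
        rw [hx] at this; linarith
      have hlow1 : 1 + (1 - ε / 2) * t ≤ ‖x + h‖ := by rw [hx] at hnum; nlinarith
      have hlow2 : 1 + (1 - ε / 2) * t ≤ ‖x - h‖ := by rw [hx] at hnum; nlinarith
      have key1 : x + h = t • (x + y) + (1 - t) • x := by rw [hhy]; module
      have key2 : x - h = t • (x - y) + (1 - t) • x := by rw [hhy]; module
      have c1 : ‖x + h‖ ≤ t * ‖x + y‖ + (1 - t) := by
        rw [key1]
        have := norm_add_le (t • (x + y)) ((1 - t) • x)
        rw [norm_smul, norm_smul, hx, Real.norm_eq_abs, Real.norm_eq_abs,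
          abs_of_nonneg ht.le, abs_of_nonneg (by linarith : (0:ℝ) ≤ 1 - t)] at this
        linarith
      have c2 : ‖x - h‖ ≤ t * ‖x - y‖ + (1 - t) := by
        rw [key2]
        have := norm_add_le (t • (x - y)) ((1 - t) • x)
        rw [norm_smul, norm_smul, hx, Real.norm_eq_abs, Real.norm_eq_abs,
          abs_of_nonneg ht.le, abs_of_nonneg (by linarith : (0:ℝ) ≤ 1 - t)] at this
        linarith
      have d1 : t * (2 - ε / 2) ≤ t * ‖x + y‖ := by nlinarith
      have d2 : t * (2 - ε / 2) ≤ t * ‖x - y‖ := by nlinarith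
      have e1 : 2 - ε / 2 ≤ ‖x + y‖ := (mul_le_mul_iff_right₀ ht).mp d1
      have e2 : 2 - ε / 2 ≤ ‖x - y‖ := (mul_le_mul_iff_right₀ ht).mp d2
      first
      | (show (2:ℝ) - ε < ‖x + y‖; linarith)
      | (show (2:ℝ) - ε < ‖x - y‖; linarith) }
  · -- locally octahedral → 2-rough
    intro H x
    rcases eq_or_ne x 0 with rfl | hx0
    · have heq : ∀ᶠ h : X in nhdsWithin (0 : X) {(0 : X)}ᶜ,
          (fun h : X => (‖(0:X) + h‖ + ‖(0:X) - h‖ - 2 * ‖(0:X)‖) / ‖h‖) h = 2 := by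
        filter_upwards [self_mem_nhdsWithin] with h hh
        have hne : ‖h‖ ≠ 0 := norm_ne_zero_iff.mpr hh
        simp only [zero_add, zero_sub, norm_neg, norm_zero, mul_zero, sub_zero]
        field_simp
        ring
      have hbd0 : IsBoundedUnder (· ≤ ·) (nhdsWithin (0 : X) {(0 : X)}ᶜ)
          (fun h : X => (‖(0:X) + h‖ + ‖(0:X) - h‖ - 2 * ‖(0:X)‖) / ‖h‖) :=
        Filter.isBoundedUnder_of_eventually_le (a := 2) (heq.mono fun h hh => hh.le)
      exact le_limsup_of_frequently_le (heq.frequently.mono fun h hh => hh.ge) hbd0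
    · have ha : 0 < ‖x‖ := norm_pos_iff.mpr hx0
      set u : X := (‖x‖)⁻¹ • x with hudef
      have hu : ‖u‖ = 1 := norm_smul_inv_norm hx0
      set f : X → ℝ := fun h => (‖x + h‖ + ‖x - h‖ - 2 * ‖x‖) / ‖h‖ with hfdef
      have hub : ∀ h : X, f h ≤ 2 := by
        intro h
        rcases eq_or_ne h 0 with rfl | hh
        · simp [hfdef]
        · have hpos : 0 < ‖h‖ := norm_pos_iff.mpr hh
          have t1 : ‖x + h‖ ≤ ‖x‖ + ‖h‖ := norm_add_le x h
          have t2 : ‖x - h‖ ≤ ‖x‖ + ‖h‖ := norm_sub_le x h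
          rw [hfdef, div_le_iff₀ hpos]
          nlinarith
      have hbd : IsBoundedUnder (· ≤ ·) (nhdsWithin (0 : X) {(0 : X)}ᶜ) f :=
        Filter.isBoundedUnder_of ⟨2, fun h => hub h⟩
      apply le_of_forall_pos_le_add
      intro δ hδ
      have hfreq : ∃ᶠ h : X in nhdsWithin (0 : X) {(0 : X)}ᶜ, 2 - δ ≤ f h := by
        rw [Filter.frequently_iff]
        intro U hU
        obtain ⟨r, hr, hrsub⟩ := Metric.mem_nhdsWithin_iff.mp hU
        set t : ℝ := min (r / 2) ‖x‖ with htdef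
        have ht : 0 < t := lt_min (by linarith) ha
        have htx : t ≤ ‖x‖ := min_le_right _ _
        have htr : t < r := lt_of_le_of_lt (min_le_left _ _) (by linarith)
        have hε₀ : 0 < δ * t / (2 * ‖x‖) := by positivity
        obtain ⟨y, hy, hy1, hy2⟩ := H u hu (δ * t / (2 * ‖x‖)) hε₀
        refine ⟨t • y, hrsub ⟨?_, ?_⟩, ?_⟩
        · rw [Metric.mem_ball, dist_zero_right, norm_smul, Real.norm_eq_abs,
            abs_of_pos ht, hy, mul_one]
          exact htr
        · simp only [Set.mem_compl_iff, Set.mem_singleton_iff]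
          intro hcon
          have : ‖t • y‖ = 0 := by rw [hcon, norm_zero]
          rw [norm_smul, Real.norm_eq_abs, abs_of_pos ht, hy, mul_one] at this
          exact ne_of_gt ht this
        · have hnty : ‖t • y‖ = t := by
            rw [norm_smul, Real.norm_eq_abs, abs_of_pos ht, hy, mul_one]
          have hxu : ‖x‖ • u = x := by
            rw [hudef, smul_inv_smul₀ (ne_of_gt ha)]
          have e1 : x + t • y = ‖x‖ • (u + y) - (‖x‖ - t) • y := by
            rw [smul_add, hxu, sub_smul]; abel
          have e2 : x - t • y = ‖x‖ • (u - y) + (‖x‖ - t) • y := by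
            rw [smul_sub, hxu, sub_smul]; abel
          have n1 : ‖x‖ * ‖u + y‖ - (‖x‖ - t) ≤ ‖x + t • y‖ := by
            rw [e1]
            have := norm_sub_norm_le (‖x‖ • (u + y)) ((‖x‖ - t) • y)
            rw [norm_smul, norm_smul, hy, Real.norm_eq_abs, Real.norm_eq_abs,
              abs_of_pos ha, abs_of_nonneg (by linarith : (0:ℝ) ≤ ‖x‖ - t),
              mul_one] at this
            linarith
          have n2 : ‖x‖ * ‖u - y‖ - (‖x‖ - t) ≤ ‖x - t • y‖ := by
            rw [e2]
            have h' : ‖‖x‖ • (u - y)‖ - ‖-((‖x‖ - t) • y)‖ ≤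
                ‖‖x‖ • (u - y) - -((‖x‖ - t) • y)‖ :=
              norm_sub_norm_le _ _
            rw [sub_neg_eq_add, norm_neg, norm_smul, norm_smul, hy, Real.norm_eq_abs,
              Real.norm_eq_abs, abs_of_pos ha,
              abs_of_nonneg (by linarith : (0:ℝ) ≤ ‖x‖ - t), mul_one] at h'
            linarith
          have m1 : ‖x‖ * (2 - δ * t / (2 * ‖x‖)) ≤ ‖x‖ * ‖u + y‖ :=
            mul_le_mul_of_nonneg_left (le_of_lt hy1) ha.le
          have m2 : ‖x‖ * (2 - δ * t / (2 * ‖x‖)) ≤ ‖x‖ * ‖u - y‖ :=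
            mul_le_mul_of_nonneg_left (le_of_lt hy2) ha.le
          have hsimp : ‖x‖ * (2 - δ * t / (2 * ‖x‖)) = 2 * ‖x‖ - δ * t / 2 := by
            field_simp
          rw [hsimp] at m1 m2
          rw [hfdef]
          simp only
          rw [hnty, le_div_iff₀ ht]
          nlinarith
      have := le_limsup_of_frequently_le hfreq hbd
      linarith [this]
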